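/- The co-inductive completion model ℤ̄, the extensional completion of the partial K-model with underlying set ℤ (discretely ordered) and j({n}, n+1) = n+1, is not hyperimmune: the sequence α_n = −n with the recursive function g(n) = 1 witnesses the failure. -/

import Mathlib

/-- A finite antichain of a poset `D`. -/
def FinAntichain (D : Type*) [PartialOrder D] := {a : Finset D // IsAntichain (· ≤ ·) (a : Set D)}

/-- The order `a ≤ b` iff every element of `a` is below some element of `b`. -/
instance {D : Type*} [PartialOrder D] : Preorder (FinAntichain D) where
  le a b := ∀ α ∈ a.1, ∃ β ∈ b.1, α ≤ β
  le_refl a := fun α h => ⟨α, h, le_refl α⟩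
  le_trans a b c hab hbc := fun α hα => by
    obtain ⟨β, hβ, h1⟩ := hab α hα
    obtain ⟨γ, hγ, h2⟩ := hbc β hβ
    exact ⟨γ, hγ, h1.trans h2⟩

/-- An extensional (possibly partial) K-model structure on a poset `D`: a partial map `j`
defined on `dom ⊆ (A_f(D)ᵒᵖ × D)` which is an order isomorphism from `dom` onto `D`
(recall `(a, α) ≤ (b, β)` in `A_f(D)ᵒᵖ × D` iff `b ≤ a` and `α ≤ β`). -/
structure PartialKModel (D : Type*) [PartialOrder D] where
  dom : Set (FinAntichain D × D)
  j : FinAntichain D × D → D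
  injOn : Set.InjOn j dom
  surj : ∀ α : D, ∃ p ∈ dom, j p = α
  le_iff : ∀ p ∈ dom, ∀ q ∈ dom, (j p ≤ j q ↔ (q.1 ≤ p.1 ∧ p.2 ≤ q.2))

/-- `Unfolds M α l α'` : `α = a₁ → ⋯ → aₘ → α'` where `l = [a₁, …, aₘ]`, unfolding through the
(partial) isomorphism `j`. -/
inductive PartialKModel.Unfolds {D : Type*} [PartialOrder D] (M : PartialKModel D) :
    D → List (FinAntichain D) → D → Prop
  | nil (α : D) : PartialKModel.Unfolds M α [] α
  | cons {a : FinAntichain D} {β α' : D} {l : List (FinAntichain D)} :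
      (a, β) ∈ M.dom → PartialKModel.Unfolds M β l α' →
      PartialKModel.Unfolds M (M.j (a, β)) (a :: l) α'

/-- `BadWitness M α g` : for every `n`, `α n` unfolds as `a_{n,1} → ⋯ → a_{n,g n} → α'` and
`α (n+1)` belongs to one of the antichains `a_{n,k}`, `k ≤ g n`. -/
def PartialKModel.BadWitness {D : Type*} [PartialOrder D] (M : PartialKModel D)
    (α : ℕ → D) (g : ℕ → ℕ) : Prop :=
  ∀ n : ℕ, ∃ (l : List (FinAntichain D)) (α' : D),
    l.length = g n ∧ M.Unfolds (α n) l α' ∧ ∃ a ∈ l, α (n + 1) ∈ a.1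

/-- Hyperimmunity: no sequence `(α_n)` and recursive `g` satisfy the bad-witness condition. -/
def PartialKModel.Hyperimmune {D : Type*} [PartialOrder D] (M : PartialKModel D) : Prop :=
  ¬ ∃ (α : ℕ → D) (g : ℕ → ℕ), Computable g ∧ M.BadWitness α g

/-- The increasing approximations of a completion: `strata N B 0 = B` and
`strata N B (n+1)` adds all `j(a, β)` with `a` and `β` from `strata N B n`. -/
def PartialKModel.strata {D : Type*} [PartialOrder D] (N : PartialKModel D) (B : Set D) :
    ℕ → Set D
  | 0 => B
  | n + 1 => N.strata B n ∪
      {x | ∃ (a : FinAntichain D) (β : D),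
        ((a.1 : Finset D) : Set D) ⊆ N.strata B n ∧ β ∈ N.strata B n ∧ N.j (a, β) = x}

/-- `IsCompletion M N ι` : the total K-model `N` on `D̄`, together with the order-embedding
`ι : E → D̄`, is the completion of the partial K-model `M` on `E`: `N` is total, `ι` preserves
and reflects the order, `ι` transports `j_M` to `j_N` (the antichain being transported
pointwise), and every element of `D̄` appears in some stratum of the completion over the image
of `E`. -/
def IsCompletion {E DD : Type*} [PartialOrder E] [PartialOrder DD]
    (M : PartialKModel E) (N : PartialKModel DD) (ι : E → DD) : Prop :=
  N.dom = Set.univ ∧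
  (∀ x y : E, ι x ≤ ι y ↔ x ≤ y) ∧
  (∀ p ∈ M.dom, ∃ b : FinAntichain DD,
      ((b.1 : Finset DD) : Set DD) = ι '' ((p.1.1 : Finset E) : Set E) ∧
      N.j (b, ι p.2) = ι (M.j p)) ∧
  (∀ x : DD, ∃ n : ℕ, x ∈ N.strata (Set.range ι) n)

/-- `ℤ` with the discrete (identity) order. -/
def DiscInt := ℤ

instance : PartialOrder DiscInt where
  le a b := a = b
  le_refl _ := rfl
  le_trans _ _ _ h1 h2 := Eq.trans h1 h2
  le_antisymm _ _ h _ := h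

def DiscInt.toInt (k : DiscInt) : ℤ := k

def DiscInt.ofInt (k : ℤ) : DiscInt := k

/-- the partial K-model underlying the co-inductive completion `ℤ̄`, with carrier
`ℤ` discretely ordered and `j({n}, n+1) = n+1` (so each `m` unfolds as `{m−1} → m`), is not
hyperimmune: the sequence `α_n = −n` with the recursive function `g(n) = 1` witnesses the
failure. -/
theorem intbar_not_hyperimmune
    (M : PartialKModel DiscInt)
    (hdom : ∀ p : FinAntichain DiscInt × DiscInt,
      p ∈ M.dom ↔ (∀ k : DiscInt, k ∈ p.1.1 ↔ k.toInt = p.2.toInt - 1))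
    (hj : ∀ p ∈ M.dom, M.j p = p.2) :
    (M.BadWitness (fun n => DiscInt.ofInt (-(n : ℤ))) (fun _ => 1) ∧
      Computable (fun _ : ℕ => (1 : ℕ))) ∧
    ¬ M.Hyperimmune := by
  have hbad : M.BadWitness (fun n => DiscInt.ofInt (-(n : ℤ))) (fun _ => 1) := by
    intro n
    set a : FinAntichain DiscInt :=
      ⟨{DiscInt.ofInt (-(n : ℤ) - 1)}, by
        intro x hx y hy hxy
        simp only [Finset.coe_singleton, Set.mem_singleton_iff] at hx hy
        exact absurd (hx.trans hy.symm) hxy⟩ with ha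
    have hmem : (a, DiscInt.ofInt (-(n : ℤ))) ∈ M.dom := by
      rw [hdom]
      intro k
      simp [ha, DiscInt.toInt, DiscInt.ofInt, Finset.mem_singleton]
      exact Finset.mem_singleton
    refine ⟨[a], DiscInt.ofInt (-(n : ℤ)), rfl, ?_, a, List.mem_singleton_self a, ?_⟩
    · have := PartialKModel.Unfolds.cons (M := M) hmem
        (PartialKModel.Unfolds.nil (DiscInt.ofInt (-(n : ℤ))))
      have hje : M.j (a, DiscInt.ofInt (-(n : ℤ))) = DiscInt.ofInt (-(n : ℤ)) :=
        hj _ hmem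
      rw [hje] at this
      convert this using 2
    · show DiscInt.ofInt (-((n:ℕ) + 1 : ℕ) : ℤ) ∈ a.1
      simp only [ha, Finset.mem_singleton]
      show DiscInt.ofInt (-((n:ℕ) + 1 : ℕ) : ℤ) = DiscInt.ofInt (-(n : ℤ) - 1)
      unfold DiscInt.ofInt
      push_cast
      ring
      rfl
  refine ⟨⟨hbad, Computable.const 1⟩, ?_⟩
  intro h
  exact h ⟨_, _, Computable.const 1, hbad⟩
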